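/- Let G be a finite simple connected graph of order n ≥ 3. Then ψ(G) = n − 1 if and only if G is isomorphic to K_n, K_{1,n−1}, K_{2,n−2}, or K_2 ∨ K̄_{n−2}. -/

import Mathlib

open SimpleGraph

/-- Vertices `u, v` are doubly resolved by vertices `x, y` if
`d(u,x) − d(v,x) ≠ d(u,y) − d(v,y)`. -/
def doublyResolves {V : Type*} (G : SimpleGraph V) (x y u v : V) : Prop :=
  (G.dist u x : ℤ) - (G.dist v x : ℤ) ≠ (G.dist u y : ℤ) - (G.dist v y : ℤ)

/-- A set `W` of vertices is a doubly resolving set for `G` if every two distinct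
vertices of `G` are doubly resolved by some two vertices of `W`. -/
def IsDoublyResolvingSet {V : Type*} (G : SimpleGraph V) (W : Set V) : Prop :=
  ∀ u v : V, u ≠ v → ∃ x ∈ W, ∃ y ∈ W, doublyResolves G x y u v

/-- The doubly resolving number `ψ(G)`: the minimum cardinality of a doubly
resolving set for `G`. -/
noncomputable def psi {V : Type*} (G : SimpleGraph V) : ℕ :=
  sInf {k | ∃ W : Finset V, W.card = k ∧ IsDoublyResolvingSet G ↑W}

/-- The join `G ∨ H` of two graphs on disjoint vertex sets: it contains the edges of
`G`, the edges of `H`, and all edges between vertices of `G` and vertices of `H`. -/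
def graphJoin {α β : Type*} (G : SimpleGraph α) (H : SimpleGraph β) :
    SimpleGraph (α ⊕ β) where
  Adj x y := match x, y with
    | .inl a, .inl b => G.Adj a b
    | .inr a, .inr b => H.Adj a b
    | .inl _, .inr _ => True
    | .inr _, .inl _ => True
  symm := ⟨by
    rintro (a | a) (b | b) h
    · exact G.adj_symm h
    · trivial
    · trivial
    · exact H.adj_symm h⟩
  loopless := ⟨by
    rintro (a | a) h
    · exact G.irrefl h
    · exact H.irrefl h⟩

section Aux
set_option linter.unusedSectionVars false

open Classical in
/-- Pair `{a,b}` is "bad": some pair of vertices has constant distance difference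
off `{a,b}`. -/
def BadPair {V : Type*} (G : SimpleGraph V) (a b : V) : Prop :=
  ∃ u v : V, u ≠ v ∧ ∃ c : ℤ,
    ∀ x : V, x ≠ a → x ≠ b → (G.dist u x : ℤ) - (G.dist v x : ℤ) = c

def AllBad {V : Type*} (G : SimpleGraph V) : Prop :=
  ∀ a b : V, a ≠ b → BadPair G a b

/-- `G` is a star with center `c`. -/
def IsStar {V : Type*} (G : SimpleGraph V) (c : V) : Prop :=
  ∀ z, z ≠ c → G.Adj c z ∧ ∀ x, G.Adj z x → x = c

/-- Two-center structure: every vertex off `{p,q}` is adjacent to exactly `p` and `q`. -/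
def TwoCenter {V : Type*} (G : SimpleGraph V) (p q : V) : Prop :=
  p ≠ q ∧ ∀ z, z ≠ p → z ≠ q →
    (G.Adj z p ∧ G.Adj z q ∧ ∀ x, G.Adj z x → x = p ∨ x = q)

variable {V : Type*} [Fintype V] {G : SimpleGraph V}

lemma dist_eq_two (hG : G.Connected) {u v w : V} (huv : u ≠ v) (hna : ¬ G.Adj u v)
    (h1 : G.Adj u w) (h2 : G.Adj w v) : G.dist u v = 2 := by
  have hle : G.dist u v ≤ 2 := by
    have := G.dist_le (Walk.cons h1 (Walk.cons h2 Walk.nil))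
    simpa using this
  have h0 : G.dist u v ≠ 0 := by
    have := hG.pos_dist_of_ne huv
    omega
  have h1' : G.dist u v ≠ 1 := fun h => hna (dist_eq_one_iff_adj.mp h)
  omega

lemma exists_two_nbrs (hG : G.Connected) (hn : 3 ≤ Fintype.card V) :
    ∃ a p q : V, p ≠ q ∧ G.Adj a p ∧ G.Adj a q := by
  classical
  by_contra hcon
  push_neg at hcon
  have hdeg : ∀ a p q : V, G.Adj a p → G.Adj a q → p = q := by
    intro a p q hp hq
    by_contra hne
    exact hcon a p q hne hp hq
  obtain ⟨u, v0, huv⟩ : ∃ u v : V, u ≠ v := Fintype.exists_pair_of_one_lt_card (by omega)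
  obtain ⟨p0⟩ := hG.preconnected u v0
  have hadj : ∃ v, G.Adj u v := by
    cases p0 with
    | nil => exact absurd rfl huv
    | cons h q => exact ⟨_, h⟩
  obtain ⟨v, huv'⟩ := hadj
  have key : ∀ n (a b w : V), G.Adj a b → ∀ p : G.Walk a w, p.length ≤ n → w = a ∨ w = b := by
    intro n
    induction n with
    | zero =>
      intro a b w hab p hp
      cases p with
      | nil => exact Or.inl rfl
      | cons h q => simp [Walk.length_cons] at hp
    | succ n ih =>
      intro a b w hab p hp
      cases p with
      | nil => exact Or.inl rfl
      | @cons _ x _ h q =>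
        have hx : x = b := hdeg a x b h hab
        have hab' : G.Adj x a := by rw [hx]; exact hab.symm
        have hq : q.length ≤ n := by
          simp [Walk.length_cons] at hp; omega
        rcases ih x a w hab' q hq with h1 | h1
        · exact Or.inr (h1.trans hx)
        · exact Or.inl h1
  have hall : ∀ w : V, w = u ∨ w = v := by
    intro w
    obtain ⟨p⟩ := hG.preconnected u w
    exact key p.length u v w huv' p le_rfl
  have hsub : (Finset.univ : Finset V) ⊆ {u, v} := by
    intro x _
    rcases hall x with h | h <;> simp [h]
  have hcard : Fintype.card V ≤ 2 := by
    calc Fintype.card V = (Finset.univ : Finset V).card := rfl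
    _ ≤ ({u, v} : Finset V).card := Finset.card_le_card hsub
    _ ≤ 2 := Finset.card_insert_le _ _ |>.trans (by simp)
  omega

lemma dr_comm {x y u v : V} (h : doublyResolves G x y u v) : doublyResolves G x y v u := by
  intro heq
  exact h (by omega)

lemma psi_le (hG : G.Connected) (hn : 3 ≤ Fintype.card V) :
    psi G ≤ Fintype.card V - 1 := by
  classical
  obtain ⟨a, p, q, hpq, hap, haq⟩ := exists_two_nbrs hG hn
  set W : Finset V := Finset.univ.erase a with hW
  have hcard : W.card = Fintype.card V - 1 := by
    simp [hW, Finset.card_erase_of_mem]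
  have hmem : ∀ x : V, x ≠ a → x ∈ (↑W : Set V) := by
    intro x hx; simp [hW, hx]
  have main : ∀ v : V, v ≠ a → ∃ x ∈ (↑W : Set V), ∃ y ∈ (↑W : Set V),
      doublyResolves G x y a v := by
    intro v hv
    have hav : 0 < G.dist a v := hG.pos_dist_of_ne (Ne.symm hv)
    by_cases hvp : v = p
    · refine ⟨v, hmem v hv, q, hmem q (fun h => G.irrefl (h ▸ haq)), ?_⟩
      intro heq
      have h1 : G.dist a q = 1 := dist_eq_one_iff_adj.mpr haq
      have h2 : G.dist a v = G.dist a v := rfl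
      have hvq : v ≠ q := by rw [hvp]; exact hpq
      have h3 : 0 < G.dist v q := hG.pos_dist_of_ne hvq
      simp only [SimpleGraph.dist_self] at heq
      rw [h1] at heq
      omega
    · refine ⟨v, hmem v hv, p, hmem p (fun h => G.irrefl (h ▸ hap)), ?_⟩
      intro heq
      have h1 : G.dist a p = 1 := dist_eq_one_iff_adj.mpr hap
      have h3 : 0 < G.dist v p := hG.pos_dist_of_ne hvp
      simp only [SimpleGraph.dist_self] at heq
      rw [h1] at heq
      omega
  have hDR : IsDoublyResolvingSet G (↑W : Set V) := by
    intro u v huv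
    by_cases hu : u = a
    · subst hu
      exact main v (Ne.symm huv)
    · by_cases hv : v = a
      · subst hv
        obtain ⟨x, hx, y, hy, hxy⟩ := main u hu
        exact ⟨x, hx, y, hy, dr_comm hxy⟩
      · refine ⟨u, hmem u hu, v, hmem v hv, ?_⟩
        intro heq
        have h1 : 0 < G.dist u v := hG.pos_dist_of_ne huv
        have h2 : G.dist v u = G.dist u v := dist_comm
        simp only [SimpleGraph.dist_self] at heq
        rw [h2] at heq
        omega
  exact Nat.sInf_le ⟨W, hcard, hDR⟩

lemma univ_dr (hG : G.Connected) : IsDoublyResolvingSet G (↑(Finset.univ : Finset V)) := by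
  intro u v huv
  refine ⟨u, by simp, v, by simp, ?_⟩
  intro heq
  have h1 : 0 < G.dist u v := hG.pos_dist_of_ne huv
  have h2 : G.dist v u = G.dist u v := dist_comm
  simp only [SimpleGraph.dist_self] at heq
  rw [h2] at heq
  omega

lemma psi_eq_iff_allBad (hG : G.Connected) (hn : 3 ≤ Fintype.card V) :
    psi G = Fintype.card V - 1 ↔ AllBad G := by
  classical
  constructor
  · intro hpsi a b hab
    by_contra hnb
    rw [BadPair] at hnb
    push_neg at hnb
    set W : Finset V := Finset.univ \ {a, b} with hWdef
    have hab2 : ({a, b} : Finset V).card = 2 := by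
      rw [Finset.card_insert_of_notMem (by simp [hab]), Finset.card_singleton]
    have hWcard : W.card = Fintype.card V - 2 := by
      rw [hWdef, Finset.card_sdiff_of_subset (Finset.subset_univ _), hab2, Finset.card_univ]
    have hW0 : 0 < W.card := by omega
    obtain ⟨x0, hx0⟩ := Finset.card_pos.mp hW0
    have hx0' : x0 ≠ a ∧ x0 ≠ b := by
      simp only [hWdef, Finset.mem_sdiff, Finset.mem_insert, Finset.mem_singleton] at hx0
      tauto
    have hDR : IsDoublyResolvingSet G (↑W : Set V) := by
      intro u v huv
      obtain ⟨x1, hx1a, hx1b, hx1⟩ :=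
        hnb u v huv ((G.dist u x0 : ℤ) - (G.dist v x0 : ℤ))
      refine ⟨x1, by simp [hWdef, hx1a, hx1b], x0, by simp [hWdef, hx0'.1, hx0'.2], hx1⟩
    have : psi G ≤ Fintype.card V - 2 := Nat.sInf_le ⟨W, hWcard, hDR⟩
    omega
  · intro hbad
    refine le_antisymm (psi_le hG hn) ?_
    refine le_csInf ⟨Fintype.card V, Finset.univ, by simp, univ_dr hG⟩ ?_
    rintro k ⟨W, hWcard, hDR⟩
    by_contra hk
    push_neg at hk
    have hWle : W.card ≤ Fintype.card V - 2 := by omega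
    have hcompl : 1 < (Finset.univ \ W).card := by
      rw [Finset.card_sdiff_of_subset (Finset.subset_univ _), Finset.card_univ]
      omega
    obtain ⟨a, ha, b, hb, hab⟩ := Finset.one_lt_card.mp hcompl
    simp only [Finset.mem_sdiff, Finset.mem_univ, true_and] at ha hb
    obtain ⟨u, v, huv, c, hc⟩ := hbad a b hab
    obtain ⟨x, hx, y, hy, hxy⟩ := hDR u v huv
    rw [Finset.mem_coe] at hx hy
    have hxa : x ≠ a := fun h => ha (h ▸ hx)
    have hxb : x ≠ b := fun h => hb (h ▸ hx)
    have hya : y ≠ a := fun h => ha (h ▸ hy)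
    have hyb : y ≠ b := fun h => hb (h ▸ hy)
    exact hxy ((hc x hxa hxb).trans (hc y hya hyb).symm)

lemma allBad_of_complete (hG : G.Connected) (h : ∀ x y : V, x ≠ y → G.Adj x y) :
    AllBad G := by
  intro a b hab
  refine ⟨a, b, hab, 0, ?_⟩
  intro x hxa hxb
  have h1 : G.dist a x = 1 := dist_eq_one_iff_adj.mpr (h a x (Ne.symm hxa))
  have h2 : G.dist b x = 1 := dist_eq_one_iff_adj.mpr (h b x (Ne.symm hxb))
  rw [h1, h2]
  norm_num

lemma allBad_of_star (hG : G.Connected) {c : V} (h : IsStar G c) : AllBad G := by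
  have hd1 : ∀ z, z ≠ c → G.dist c z = 1 := fun z hz =>
    dist_eq_one_iff_adj.mpr (h z hz).1
  have hd2 : ∀ z x, z ≠ c → x ≠ c → z ≠ x → G.dist z x = 2 := by
    intro z x hz hx hzx
    have hna : ¬ G.Adj z x := fun had => hx ((h z hz).2 x had)
    exact dist_eq_two hG hzx hna ((h z hz).1).symm (h x hx).1
  intro a b hab
  by_cases ha : a = c
  · subst ha
    refine ⟨a, b, hab, -1, ?_⟩
    intro x hxa hxb
    rw [hd1 x hxa, dist_comm (u := b), hd2 x b hxa hab.symm hxb]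
    norm_num
  · by_cases hb : b = c
    · subst hb
      refine ⟨b, a, Ne.symm hab, -1, ?_⟩
      intro x hxa hxb
      rw [hd1 x hxb, dist_comm (u := a), hd2 x a hxb ha hxa]
      norm_num
    · refine ⟨a, b, hab, 0, ?_⟩
      intro x hxa hxb
      by_cases hxc : x = c
      · subst hxc
        rw [dist_comm (u := a), hd1 a ha, dist_comm (u := b), hd1 b hb]
        norm_num
      · rw [hd2 a x ha hxc (Ne.symm hxa), hd2 b x hb hxc (Ne.symm hxb)]
        norm_num

lemma allBad_of_twoCenter (hG : G.Connected) {p q : V} (h : TwoCenter G p q) :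
    AllBad G := by
  obtain ⟨hpq, hz⟩ := h
  have hd1 : ∀ z s, z ≠ p → z ≠ q → (s = p ∨ s = q) → G.dist z s = 1 := by
    intro z s hzp hzq hs
    rcases hs with h1 | h1 <;> subst h1
    · exact dist_eq_one_iff_adj.mpr (hz z hzp hzq).1
    · exact dist_eq_one_iff_adj.mpr (hz z hzp hzq).2.1
  have hd2 : ∀ z x, z ≠ p → z ≠ q → x ≠ p → x ≠ q → z ≠ x → G.dist z x = 2 := by
    intro z x hzp hzq hxp hxq hzx
    have hna : ¬ G.Adj z x := by
      intro had
      rcases (hz z hzp hzq).2.2 x had with h1 | h1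
      · exact hxp h1
      · exact hxq h1
    exact dist_eq_two hG hzx hna (hz z hzp hzq).1 ((hz x hxp hxq).1).symm
  have helper : ∀ s s' t : V, ((s = p ∧ s' = q) ∨ (s = q ∧ s' = p)) →
      t ≠ p → t ≠ q → BadPair G s t := by
    intro s s' t hs htp htq
    have hts' : t ≠ s' := by rcases hs with ⟨h1, h2⟩ | ⟨h1, h2⟩ <;> subst h2 <;> assumption
    refine ⟨t, s', hts', 1, ?_⟩
    intro x hxs hxt
    by_cases hxs' : x = s'
    · subst hxs'
      rw [hd1 t x htp htq (by tauto), SimpleGraph.dist_self]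
      norm_num
    · have hxp : x ≠ p := by rcases hs with ⟨h1, h2⟩ | ⟨h1, h2⟩ <;> subst h1 <;> subst h2 <;> assumption
      have hxq : x ≠ q := by rcases hs with ⟨h1, h2⟩ | ⟨h1, h2⟩ <;> subst h1 <;> subst h2 <;> assumption
      rw [hd2 t x htp htq hxp hxq (Ne.symm hxt), dist_comm (u := s'), hd1 x s' hxp hxq (by tauto)]
      norm_num
  have badpair_comm : ∀ a b : V, BadPair G a b → BadPair G b a := by
    rintro a b ⟨u, v, huv, c, hc⟩
    exact ⟨u, v, huv, c, fun x hxb hxa => hc x hxa hxb⟩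
  intro a b hab
  by_cases hap : a = p
  · subst hap
    by_cases hbq : b = q
    · subst hbq
      refine ⟨a, b, hab, 0, ?_⟩
      intro x hxa hxb
      rw [dist_comm (u := a), hd1 x a hxa hxb (Or.inl rfl),
        dist_comm (u := b), hd1 x b hxa hxb (Or.inr rfl)]
      norm_num
    · exact helper a q b (Or.inl ⟨rfl, rfl⟩) hab.symm hbq
  · by_cases haq : a = q
    · subst haq
      by_cases hbp : b = p
      · subst hbp
        refine ⟨a, b, hab, 0, ?_⟩
        intro x hxa hxb
        rw [dist_comm (u := a), hd1 x a hxb hxa (Or.inr rfl),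
          dist_comm (u := b), hd1 x b hxb hxa (Or.inl rfl)]
        norm_num
      · exact helper a p b (Or.inr ⟨rfl, rfl⟩) hbp hab.symm
    · by_cases hbp : b = p
      · subst hbp
        exact badpair_comm _ _ (helper b q a (Or.inl ⟨rfl, rfl⟩) hap haq)
      · by_cases hbq : b = q
        · subst hbq
          exact badpair_comm _ _ (helper b p a (Or.inr ⟨rfl, rfl⟩) hap haq)
        · refine ⟨a, b, hab, 0, ?_⟩
          intro x hxa hxb
          by_cases hxp : x = p
          · rw [hxp, hd1 a p hap haq (Or.inl rfl), hd1 b p hbp hbq (Or.inl rfl)]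
            norm_num
          · by_cases hxq : x = q
            · rw [hxq, hd1 a q hap haq (Or.inr rfl), hd1 b q hbp hbq (Or.inr rfl)]
              norm_num
            · rw [hd2 a x hap haq hxp hxq (Ne.symm hxa),
                hd2 b x hbp hbq hxp hxq (Ne.symm hxb)]
              norm_num

lemma length_drop {u v : V} (p : G.Walk u v) (n : ℕ) :
    (p.drop n).length = p.length - n := by
  induction p generalizing n with
  | nil => cases n <;> simp [Walk.drop]
  | cons h q ih =>
    cases n with
    | zero => simp [Walk.drop]
    | succ n =>
      show (q.drop n).length = _
      rw [ih, Walk.length_cons]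
      omega

lemma exists_ne3 (hn4 : 4 ≤ Fintype.card V) (a b c : V) :
    ∃ x : V, x ≠ a ∧ x ≠ b ∧ x ≠ c := by
  classical
  have hcard : ({a, b, c} : Finset V).card ≤ 3 := by
    apply le_trans (Finset.card_insert_le _ _)
    simp [Finset.card_insert_le]
    exact Nat.lt_succ_of_le (le_trans (Finset.card_insert_le _ _) (by simp))
  have : 0 < (Finset.univ \ ({a, b, c} : Finset V)).card := by
    rw [Finset.card_sdiff_of_subset (Finset.subset_univ _), Finset.card_univ]
    omega
  obtain ⟨x, hx⟩ := Finset.card_pos.mp this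
  simp only [Finset.mem_sdiff, Finset.mem_insert, Finset.mem_singleton] at hx
  exact ⟨x, by tauto, by tauto, by tauto⟩

/-- Auxiliary structure: constant difference over the complement of a pair. -/
def Cst (G : SimpleGraph V) (a b : V) : Prop :=
  ∃ c : ℤ, ∀ x, x ≠ a → x ≠ b → (G.dist a x : ℤ) - (G.dist b x : ℤ) = c

/-- Auxiliary structure: some `w` dominates `a` away from `b`. -/
def Dom (G : SimpleGraph V) (a b : V) : Prop :=
  ∃ w, w ≠ a ∧ w ≠ b ∧ ∀ x, x ≠ a → x ≠ b →
    G.dist a x = G.dist a w + G.dist w x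

lemma badPair_cases (hG : G.Connected) {a b : V} (hab : a ≠ b) (h : BadPair G a b) :
    Cst G a b ∨ Dom G a b ∨ Dom G b a := by
  obtain ⟨u, v, huv, c, hc⟩ := h
  by_cases hua : u = a
  · subst hua
    by_cases hvb : v = b
    · subst hvb; exact Or.inl ⟨c, hc⟩
    · have hva : v ≠ u := Ne.symm huv
      refine Or.inr (Or.inl ⟨v, hva, hvb, ?_⟩)
      intro x hxa hxb
      have h1 := hc x hxa hxb
      have h2 := hc v hva hvb
      rw [SimpleGraph.dist_self] at h2
      omega
  · by_cases hub : u = b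
    · subst hub
      by_cases hva : v = a
      · subst hva
        refine Or.inl ⟨-c, ?_⟩
        intro x hxa hxb
        have h1 := hc x hxa hxb
        omega
      · have hvb : v ≠ u := Ne.symm huv
        refine Or.inr (Or.inr ⟨v, hvb, hva, ?_⟩)
        intro x hxb hxa
        have h1 := hc x hxa hxb
        have h2 := hc v hva hvb
        rw [SimpleGraph.dist_self] at h2
        omega
    · by_cases hva : v = a
      · subst hva
        refine Or.inr (Or.inl ⟨u, hua, hub, ?_⟩)
        intro x hxa hxb
        have h1 := hc x hxa hxb
        have h2 := hc u hua hub
        rw [SimpleGraph.dist_self] at h2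
        have h3 : G.dist u v = G.dist v u := dist_comm
        omega
      · by_cases hvb : v = b
        · subst hvb
          refine Or.inr (Or.inr ⟨u, hub, hua, ?_⟩)
          intro x hxb hxa
          have h1 := hc x hxa hxb
          have h2 := hc u hua hub
          rw [SimpleGraph.dist_self] at h2
          omega
        · exfalso
          have h1 := hc u hua hub
          have h2 := hc v hva hvb
          rw [SimpleGraph.dist_self] at h1 h2
          have h3 : G.dist v u = G.dist u v := dist_comm
          have h4 : G.dist u v = 0 := by omega
          exact huv (hG.dist_eq_zero_iff.mp h4)

lemma dom_nbrs (hG : G.Connected) {a b w : V} (hw : w ≠ a)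
    (hdom : ∀ x, x ≠ a → x ≠ b → G.dist a x = G.dist a w + G.dist w x) :
    ∀ x, G.Adj a x → x = b ∨ x = w := by
  intro x hadj
  by_cases hxb : x = b
  · exact Or.inl hxb
  · right
    have hxa : x ≠ a := (G.ne_of_adj hadj).symm
    have h1 : G.dist a x = 1 := dist_eq_one_iff_adj.mpr hadj
    have h2 := hdom x hxa hxb
    have h3 : 0 < G.dist a w := hG.pos_dist_of_ne (Ne.symm hw)
    have h4 : G.dist w x = 0 := by omega
    exact (hG.dist_eq_zero_iff.mp h4).symm

lemma leaf_dist (hG : G.Connected) {l c : V} (hlc : G.Adj l c)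
    (honly : ∀ x, G.Adj l x → x = c) :
    ∀ y, y ≠ l → G.dist y l = G.dist y c + 1 := by
  intro y hy
  have hle : G.dist y l ≤ G.dist y c + 1 := by
    have ht : G.dist y l ≤ G.dist y c + G.dist c l := hG.dist_triangle
    have h1 : G.dist c l = 1 := dist_eq_one_iff_adj.mpr hlc.symm
    omega
  have hge : G.dist y c + 1 ≤ G.dist y l := by
    obtain ⟨p, hp⟩ := hG.exists_walk_length_eq_dist l y
    cases p with
    | nil => exact absurd rfl (Ne.symm hy)
    | cons h q =>
      have hx := honly _ h
      have h1 : G.dist c y ≤ q.length := by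
        rw [← hx]; exact SimpleGraph.dist_le q
      rw [Walk.length_cons] at hp
      have h2 : G.dist y c = G.dist c y := dist_comm
      have h3 : G.dist y l = G.dist l y := dist_comm
      omega
  omega

/-- Twin pair: same neighbourhoods off the pair. -/
def TwinP (G : SimpleGraph V) (a b : V) : Prop :=
  ∀ x, x ≠ a → x ≠ b → (G.Adj a x ↔ G.Adj b x)

/-- `a` has exactly neighbours `b, w` and `w` is adjacent to everything else. -/
def Str (G : SimpleGraph V) (a b w : V) : Prop :=
  w ≠ a ∧ w ≠ b ∧ G.Adj a b ∧ G.Adj a w ∧ (∀ x, G.Adj a x → x = b ∨ x = w) ∧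
    ∀ x, x ≠ a → x ≠ b → x ≠ w → G.Adj w x

lemma twin_of_cst (hG : G.Connected)
    (hdelta : ∀ z : V, ∃ r s, r ≠ s ∧ G.Adj z r ∧ G.Adj z s)
    (hdist2 : ∀ u v : V, u ≠ v → ¬ G.Adj u v → G.dist u v = 2)
    {a b : V} (h : Cst G a b) : TwinP G a b := by
  obtain ⟨cc, hcc⟩ := h
  intro x hxa hxb
  by_contra hiff
  have hcases : (G.Adj a x ∧ ¬ G.Adj b x) ∨ (¬ G.Adj a x ∧ G.Adj b x) := by tauto
  have hval := hcc x hxa hxb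
  rcases hcases with ⟨h1, h2⟩ | ⟨h1, h2⟩
  · have d1 : G.dist a x = 1 := dist_eq_one_iff_adj.mpr h1
    have d2 : G.dist b x = 2 := hdist2 b x (Ne.symm hxb) h2
    obtain ⟨r, s, hrs, hr, hs⟩ := hdelta b
    have hna : ∀ y, G.Adj b y → y = a := by
      intro y hy
      by_contra hya
      have hyb : y ≠ b := (G.ne_of_adj hy).symm
      have hv := hcc y (Ne.intro hya) hyb
      have d3 : G.dist b y = 1 := dist_eq_one_iff_adj.mpr hy
      have d4 : 0 < G.dist a y := hG.pos_dist_of_ne (fun hh => hya hh.symm)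
      omega
    exact hrs ((hna r hr).trans (hna s hs).symm)
  · have d1 : G.dist b x = 1 := dist_eq_one_iff_adj.mpr h2
    have d2 : G.dist a x = 2 := hdist2 a x (Ne.symm hxa) h1
    obtain ⟨r, s, hrs, hr, hs⟩ := hdelta a
    have hna : ∀ y, G.Adj a y → y = b := by
      intro y hy
      by_contra hyb
      have hya : y ≠ a := (G.ne_of_adj hy).symm
      have hv := hcc y hya (Ne.intro hyb)
      have d3 : G.dist a y = 1 := dist_eq_one_iff_adj.mpr hy
      have d4 : 0 < G.dist b y := hG.pos_dist_of_ne (fun hh => hyb hh.symm)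
      omega
    exact hrs ((hna r hr).trans (hna s hs).symm)

lemma str_of_dom (hG : G.Connected)
    (hdelta : ∀ z : V, ∃ r s, r ≠ s ∧ G.Adj z r ∧ G.Adj z s)
    (hdist2 : ∀ u v : V, u ≠ v → ¬ G.Adj u v → G.dist u v = 2)
    {a b w : V} (hw1 : w ≠ a) (hw2 : w ≠ b)
    (hdom : ∀ x, x ≠ a → x ≠ b → G.dist a x = G.dist a w + G.dist w x) :
    Str G a b w := by
  have hnb := dom_nbrs hG hw1 hdom
  obtain ⟨r, s, hrs, hr, hs⟩ := hdelta a
  have hadjb : G.Adj a b ∧ G.Adj a w := by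
    rcases hnb r hr with h1 | h1 <;> rcases hnb s hs with h2 | h2
    · exact absurd (h1.trans h2.symm) hrs
    · exact ⟨h1 ▸ hr, h2 ▸ hs⟩
    · exact ⟨h2 ▸ hs, h1 ▸ hr⟩
    · exact absurd (h1.trans h2.symm) hrs
  refine ⟨hw1, hw2, hadjb.1, hadjb.2, hnb, ?_⟩
  intro x hxa hxb hxw
  have e := hdom x hxa hxb
  have d1 : G.dist a w = 1 := dist_eq_one_iff_adj.mpr hadjb.2
  have d2 : G.dist a x = 2 := by
    apply hdist2 a x (Ne.symm hxa)
    intro h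
    rcases hnb x h with hh | hh
    · exact hxb hh
    · exact hxw hh
  have d3 : G.dist w x = 1 := by omega
  exact dist_eq_one_iff_adj.mp d3

lemma classify (hG : G.Connected) (hn : 3 ≤ Fintype.card V) (hbad : AllBad G) :
    (∀ x y : V, x ≠ y → G.Adj x y) ∨ (∃ c, IsStar G c) ∨ (∃ p q, TwoCenter G p q) := by
  classical
  by_cases hn4 : 4 ≤ Fintype.card V
  swap
  · -- n = 3
    have hn3 : Fintype.card V = 3 := by omega
    by_cases hcomp : ∀ x y : V, x ≠ y → G.Adj x y
    · exact Or.inl hcomp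
    · push_neg at hcomp
      obtain ⟨u, v, huv, hnadj⟩ := hcomp
      have hd2 : G.dist u v = 2 := by
        obtain ⟨p, hpath, hlen⟩ := hG.exists_path_of_dist u v
        have hlt : p.length < Fintype.card V := hpath.length_lt
        have h0 : 0 < G.dist u v := hG.pos_dist_of_ne huv
        have h1 : G.dist u v ≠ 1 := fun h => hnadj (dist_eq_one_iff_adj.mp h)
        omega
      obtain ⟨p, hp⟩ := hG.exists_walk_length_eq_dist u v
      rw [hd2] at hp
      set w := p.getVert 1 with hwdef
      have h1 : G.Adj u w := by
        have := p.adj_getVert_succ (i := 0) (by omega)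
        rwa [Walk.getVert_zero] at this
      have h2 : G.Adj w v := by
        have h2' := p.adj_getVert_succ (i := 1) (by omega)
        have hv : p.getVert 2 = v := by
          rw [← hp]; exact p.getVert_length
        rwa [hv] at h2'
      have hwu : w ≠ u := (G.ne_of_adj h1).symm
      have hwv : w ≠ v := G.ne_of_adj h2
      have henum : ∀ x : V, x = u ∨ x = v ∨ x = w := by
        have hcard : ({u, v, w} : Finset V).card = 3 := by
          rw [Finset.card_insert_of_notMem (by simp [huv, hwu]; tauto),
            Finset.card_insert_of_notMem (by simp [hwv]; tauto),
            Finset.card_singleton]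
        have huniv : ({u, v, w} : Finset V) = Finset.univ :=
          Finset.eq_univ_of_card _ (by rw [hcard, hn3])
        intro x
        have hx : x ∈ ({u, v, w} : Finset V) := huniv ▸ Finset.mem_univ x
        simpa using hx
      refine Or.inr (Or.inl ⟨w, ?_⟩)
      intro z hz
      rcases henum z with hzu | hzv | hzw
      · subst hzu
        refine ⟨h1.symm, ?_⟩
        intro y hy
        rcases henum y with hh | hh | hh
        · rw [hh] at hy; exact absurd hy G.irrefl
        · rw [hh] at hy; exact absurd hy hnadj
        · exact hh
      · subst hzv
        refine ⟨h2, ?_⟩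
        intro y hy
        rcases henum y with hh | hh | hh
        · rw [hh] at hy; exact absurd hy.symm hnadj
        · rw [hh] at hy; exact absurd hy G.irrefl
        · exact hh
      · exact absurd hzw hz
  -- n ≥ 4
  by_cases hleaf : ∃ l c0, G.Adj l c0 ∧ ∀ x, G.Adj l x → x = c0
  · -- leaf case: star
    obtain ⟨l, c0, hlc, honly⟩ := hleaf
    have hlne : l ≠ c0 := G.ne_of_adj hlc
    have key : ∀ b, G.Adj c0 b → b ≠ l → ∀ y, G.Adj b y → y = c0 := by
      intro b hcb hbl y hby
      by_contra hyc
      have hbc : b ≠ c0 := (G.ne_of_adj hcb).symm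
      have hlb : l ≠ b := Ne.symm hbl
      rcases badPair_cases hG (Ne.symm hbc) (hbad c0 b (Ne.symm hbc)) with
        ⟨cc, hcc⟩ | ⟨w, hwc, hwb, hdom⟩ | ⟨w, hwb, hwc, hdom⟩
      · have e1 := hcc l hlne hlb
        have e2 := hcc y (Ne.intro hyc) (G.ne_of_adj hby).symm
        have d1 : G.dist c0 l = 1 := dist_eq_one_iff_adj.mpr hlc.symm
        have d2 : G.dist b l = G.dist b c0 + 1 := leaf_dist hG hlc honly b hbl
        have d3 : G.dist b c0 = 1 := dist_eq_one_iff_adj.mpr hcb.symm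
        have d4 : G.dist b y = 1 := dist_eq_one_iff_adj.mpr hby
        have d5 : 0 < G.dist c0 y := hG.pos_dist_of_ne (Ne.symm (Ne.intro hyc))
        omega
      · have hnb := dom_nbrs hG hwc hdom
        have hlw : l = w := by
          rcases hnb l hlc.symm with hh | hh
          · exact absurd hh hlb
          · exact hh
        obtain ⟨x0, hx0c, hx0b, hx0l⟩ := exists_ne3 hn4 c0 b l
        have e := hdom x0 hx0c hx0b
        have d1 : G.dist c0 w = 1 := by
          rw [← hlw]; exact dist_eq_one_iff_adj.mpr hlc.symm
        have d2 : G.dist x0 l = G.dist x0 c0 + 1 := leaf_dist hG hlc honly x0 hx0l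
        have d3 : G.dist w x0 = G.dist x0 l := by rw [← hlw]; exact dist_comm
        have d4 : G.dist x0 c0 = G.dist c0 x0 := dist_comm
        omega
      · have hnb := dom_nbrs hG hwb hdom
        have hyw : y = w := by
          rcases hnb y hby with hh | hh
          · exact absurd hh hyc
          · exact hh
        have hbw : G.Adj b w := by rw [← hyw]; exact hby
        have hwl : w ≠ l := by
          intro hh
          rw [hh] at hbw
          exact hbc (honly b hbw.symm)
        have e := hdom l hlb hlne
        have d1 : G.dist b l = G.dist b c0 + 1 := leaf_dist hG hlc honly b hbl
        have d2 : G.dist b c0 = 1 := dist_eq_one_iff_adj.mpr hcb.symm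
        have d3 : G.dist b w = 1 := dist_eq_one_iff_adj.mpr hbw
        have d4 : G.dist w l = G.dist w c0 + 1 := leaf_dist hG hlc honly w hwl
        have d5 : 0 < G.dist w c0 := hG.pos_dist_of_ne hwc
        omega
    have key2 : ∀ b, G.Adj c0 b → ∀ y, G.Adj b y → y = c0 := by
      intro b hcb y hby
      by_cases hbl : b = l
      · rw [hbl] at hby; exact honly y hby
      · exact key b hcb hbl y hby
    have hreach : ∀ n (z : V) (p : G.Walk z c0), p.length ≤ n → z = c0 ∨ G.Adj c0 z := by
      intro n
      induction n with
      | zero =>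
        intro z p hp
        cases p with
        | nil => exact Or.inl rfl
        | cons h q => simp [Walk.length_cons] at hp
      | succ n ih =>
        intro z p hp
        cases p with
        | nil => exact Or.inl rfl
        | @cons _ x _ h q =>
          have hq : q.length ≤ n := by
            simp [Walk.length_cons] at hp; omega
          rcases ih x q hq with h1 | h1
          · right
            rw [h1] at h
            exact h.symm
          · exact Or.inl (key2 x h1 z h.symm)
    refine Or.inr (Or.inl ⟨c0, ?_⟩)
    intro z hz
    obtain ⟨p⟩ := hG.preconnected z c0
    rcases hreach p.length z p le_rfl with h | h
    · exact absurd h hz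
    · exact ⟨h, fun x hx => key2 z h x hx⟩
  · -- no leaf
    push_neg at hleaf
    have hnbr : ∀ z : V, ∃ y, G.Adj z y := by
      intro z
      obtain ⟨y, hy⟩ : ∃ y : V, y ≠ z := by
        obtain ⟨a, b, hab⟩ := Fintype.exists_pair_of_one_lt_card (α := V) (by omega)
        by_cases h : a = z
        · exact ⟨b, by rw [← h]; exact fun hh => hab hh.symm⟩
        · exact ⟨a, h⟩
      obtain ⟨p⟩ := hG.preconnected z y
      cases p with
      | nil => exact absurd rfl (Ne.symm hy)
      | cons h q => exact ⟨_, h⟩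
    have hdelta : ∀ z : V, ∃ r s, r ≠ s ∧ G.Adj z r ∧ G.Adj z s := by
      intro z
      obtain ⟨y, hy⟩ := hnbr z
      obtain ⟨x, hx1, hx2⟩ := hleaf z y hy
      exact ⟨x, y, hx2, hx1, hy⟩
    have hdiam : ∀ u v : V, G.dist u v ≤ 2 := by
      by_contra hcon
      push_neg at hcon
      obtain ⟨u, v, hd⟩ := hcon
      have huv : u ≠ v := by
        intro h
        rw [h, SimpleGraph.dist_self] at hd
        omega
      rcases badPair_cases hG huv (hbad u v huv) with
        ⟨cc, hcc⟩ | ⟨w, hw1, hw2, hdom⟩ | ⟨w, hw1, hw2, hdom⟩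
      · obtain ⟨p, hp⟩ := hG.exists_walk_length_eq_dist u v
        have ha1 : G.Adj u (p.getVert 1) := by
          have h' := p.adj_getVert_succ (i := 0) (by omega)
          rwa [Walk.getVert_zero] at h'
        have ha2 : G.Adj (p.getVert 1) (p.getVert 2) :=
          p.adj_getVert_succ (i := 1) (by omega)
        have hd1q : G.dist (p.getVert 1) v ≤ G.dist u v - 1 := by
          have h' := SimpleGraph.dist_le (p.drop 1)
          rwa [length_drop, hp] at h'
        have hd2q : G.dist (p.getVert 2) v ≤ G.dist u v - 2 := by
          have h' := SimpleGraph.dist_le (p.drop 2)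
          rwa [length_drop, hp] at h'
        have hu1 : G.dist u (p.getVert 1) ≤ 1 := by
          have h' := SimpleGraph.dist_le (Walk.cons ha1 Walk.nil)
          simpa using h'
        have hu2 : G.dist u (p.getVert 2) ≤ 2 := by
          have h' := SimpleGraph.dist_le (Walk.cons ha1 (Walk.cons ha2 Walk.nil))
          simpa using h'
        have ht1 : G.dist u v ≤ G.dist u (p.getVert 1) + G.dist (p.getVert 1) v :=
          hG.dist_triangle
        have ht2 : G.dist u v ≤ G.dist u (p.getVert 2) + G.dist (p.getVert 2) v :=
          hG.dist_triangle
        have e1 : G.dist u (p.getVert 1) = 1 := by omega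
        have e1' : G.dist (p.getVert 1) v = G.dist u v - 1 := by omega
        have e2 : G.dist u (p.getVert 2) = 2 := by omega
        have e2' : G.dist (p.getVert 2) v = G.dist u v - 2 := by omega
        have hx1u : p.getVert 1 ≠ u := by
          intro h
          rw [h, SimpleGraph.dist_self] at e1
          omega
        have hx1v : p.getVert 1 ≠ v := by
          intro h
          rw [h, SimpleGraph.dist_self] at e1'
          omega
        have hx2u : p.getVert 2 ≠ u := by
          intro h
          rw [h, SimpleGraph.dist_self] at e2
          omega
        have hx2v : p.getVert 2 ≠ v := by
          intro h
          rw [h, SimpleGraph.dist_self] at e2'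
          omega
        have c1 := hcc (p.getVert 1) hx1u hx1v
        have c2 := hcc (p.getVert 2) hx2u hx2v
        have m1 : G.dist v (p.getVert 1) = G.dist (p.getVert 1) v := dist_comm
        have m2 : G.dist v (p.getVert 2) = G.dist (p.getVert 2) v := dist_comm
        omega
      · have hnb := dom_nbrs hG hw1 hdom
        obtain ⟨r, s, hrs, hr, hs⟩ := hdelta u
        have hnv : ∀ x, G.Adj u x → x = w := by
          intro x hx
          rcases hnb x hx with hh | hh
          · exfalso
            rw [hh] at hx
            have := dist_eq_one_iff_adj.mpr hx
            omega
          · exact hh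
        exact hrs ((hnv r hr).trans (hnv s hs).symm)
      · have hnb := dom_nbrs hG hw1 hdom
        obtain ⟨r, s, hrs, hr, hs⟩ := hdelta v
        have hnv : ∀ x, G.Adj v x → x = w := by
          intro x hx
          rcases hnb x hx with hh | hh
          · exfalso
            rw [hh] at hx
            have h' := dist_eq_one_iff_adj.mpr hx
            have h'' : G.dist v u = G.dist u v := dist_comm
            omega
          · exact hh
        exact hrs ((hnv r hr).trans (hnv s hs).symm)
    have hdist2 : ∀ u v : V, u ≠ v → ¬ G.Adj u v → G.dist u v = 2 := by
      intro u v h1 h2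
      have h3 := hdiam u v
      have h4 : 0 < G.dist u v := hG.pos_dist_of_ne h1
      have h5 : G.dist u v ≠ 1 := fun h => h2 (dist_eq_one_iff_adj.mp h)
      omega
    have hdich : ∀ a b : V, a ≠ b →
        TwinP G a b ∨ (∃ w, Str G a b w) ∨ (∃ w, Str G b a w) := by
      intro a b hab
      rcases badPair_cases hG hab (hbad a b hab) with
        hc | ⟨w, hw1, hw2, hdom⟩ | ⟨w, hw1, hw2, hdom⟩
      · exact Or.inl (twin_of_cst hG hdelta hdist2 hc)
      · exact Or.inr (Or.inl ⟨w, str_of_dom hG hdelta hdist2 hw1 hw2 hdom⟩)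
      · exact Or.inr (Or.inr ⟨w, str_of_dom hG hdelta hdist2 hw1 hw2 hdom⟩)
    by_cases htw : ∀ a b : V, a ≠ b → TwinP G a b
    · left
      intro x y hxy
      by_contra hnadj
      have hd2 : G.dist x y = 2 := hdist2 x y hxy hnadj
      obtain ⟨p, hp⟩ := hG.exists_walk_length_eq_dist x y
      rw [hd2] at hp
      have ha1 : G.Adj x (p.getVert 1) := by
        have h' := p.adj_getVert_succ (i := 0) (by omega)
        rwa [Walk.getVert_zero] at h'
      have ha2 : G.Adj (p.getVert 1) y := by
        have h2' := p.adj_getVert_succ (i := 1) (by omega)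
        have hv : p.getVert 2 = y := by
          rw [← hp]; exact p.getVert_length
        rwa [hv] at h2'
      have h := (htw x (p.getVert 1) (G.ne_of_adj ha1) y (Ne.symm hxy)
        (G.ne_of_adj ha2.symm)).mpr ha2
      exact hnadj h
    · push_neg at htw
      obtain ⟨a0, b0, hne0, hnt0⟩ := htw
      have hStrEx : ∃ a b w, Str G a b w := by
        rcases hdich a0 b0 hne0 with h | ⟨w, h⟩ | ⟨w, h⟩
        · exact absurd h hnt0
        · exact ⟨a0, b0, w, h⟩
        · exact ⟨b0, a0, w, h⟩
      obtain ⟨a, b, w, hwa, hwb, hab, haw, hNa, hwAll⟩ := hStrEx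
      have haw' : a ≠ w := G.ne_of_adj haw
      have hbneq : b ≠ w := Ne.symm hwb
      rcases hdich a w haw' with htwaw | ⟨u, hu⟩ | ⟨u, hu⟩
      · exfalso
        obtain ⟨x0, hx0a, hx0w, hx0b⟩ := exists_ne3 hn4 a w b
        have hadj : G.Adj w x0 := hwAll x0 hx0a hx0b hx0w
        have h' := (htwaw x0 hx0a hx0w).mpr hadj
        rcases hNa x0 h' with hh | hh
        · exact hx0b hh
        · exact hx0w hh
      · -- Str a w u; u must be b
        obtain ⟨hua, huw, haw2, hau, hNa', huAll⟩ := hu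
        have hub : u = b := by
          rcases hNa' b hab with hh | hh
          · exact absurd hh hbneq
          · exact hh.symm
        subst hub
        refine Or.inr (Or.inr ⟨u, w, Ne.symm hwb, ?_⟩)
        intro z hzb hzw
        by_cases hza : z = a
        · subst hza
          exact ⟨hab, haw, fun x hx => hNa x hx⟩
        · have hzb' : G.Adj z u := (huAll z (Ne.intro hza) hzw hzb).symm
          have hzw' : G.Adj z w := (hwAll z (Ne.intro hza) hzb hzw).symm
          refine ⟨hzb', hzw', ?_⟩
          intro y hy
          by_contra hyc
          push_neg at hyc
          obtain ⟨hyb, hyw⟩ := hyc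
          have hza' : a ≠ z := fun hh => hza hh.symm
          rcases hdich a z hza' with htw2 | ⟨u2, hu2⟩ | ⟨u2, hu2⟩
          · have hya : y ≠ a := by
              intro hh
              rw [hh] at hy
              rcases hNa z hy.symm with h' | h'
              · exact hzb h'
              · exact hzw h'
            have h' := (htw2 y hya (G.ne_of_adj hy.symm)).mpr hy
            rcases hNa y h' with hh | hh
            · exact hyb hh
            · exact hyw hh
          · obtain ⟨_, _, _, _, hNa2, _⟩ := hu2
            have hbu2 : u = u2 := by
              rcases hNa2 u hab with hh | hh
              · exact absurd hh.symm hzb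
              · exact hh
            rcases hNa2 w haw with hh | hh
            · exact absurd hh.symm hzw
            · rw [← hbu2] at hh
              exact hwb hh
          · obtain ⟨_, _, _, _, hNz2, _⟩ := hu2
            have hbu2 : u = u2 := by
              rcases hNz2 u hzb' with hh | hh
              · exact absurd hh (G.ne_of_adj hab).symm
              · exact hh
            rcases hNz2 w hzw' with hh | hh
            · exact hwa hh
            · rw [← hbu2] at hh
              exact hwb hh
      · -- Str w a u; small case
        obtain ⟨huw, hua, hwa2, hwu, hNw, huAll⟩ := hu
        obtain ⟨x0, hx0a, hx0b, hx0w⟩ := exists_ne3 hn4 a b w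
        have hx0u : x0 = u := by
          have hadj : G.Adj w x0 := hwAll x0 hx0a hx0b hx0w
          rcases hNw x0 hadj with hh | hh
          · exact absurd hh hx0a
          · exact hh
        have hub' : u ≠ b := by rw [← hx0u]; exact hx0b
        have henum : ∀ x : V, x = a ∨ x = b ∨ x = w ∨ x = u := by
          intro x
          by_cases h1 : x = a
          · tauto
          by_cases h2 : x = b
          · tauto
          by_cases h3 : x = w
          · tauto
          have hadj : G.Adj w x := hwAll x (Ne.intro h1) (Ne.intro h2) (Ne.intro h3)
          rcases hNw x hadj with hh | hh
          · exact absurd hh h1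
          · tauto
        refine Or.inr (Or.inr ⟨a, u, Ne.symm hua, ?_⟩)
        intro z hza hzu
        rcases henum z with hh | hh | hh | hh
        · exact absurd hh hza
        · subst hh
          refine ⟨hab.symm, (huAll z hbneq (G.ne_of_adj hab).symm hzu).symm, ?_⟩
          intro y hy
          rcases henum y with h' | h' | h' | h'
          · exact Or.inl h'
          · rw [h'] at hy
            exact absurd hy G.irrefl
          · rw [h'] at hy
            rcases hNw z hy.symm with h'' | h''
            · exact absurd h'' hza
            · exact absurd h'' hzu
          · exact Or.inr h'
        · subst hh
          exact ⟨hwa2, hwu, fun y hy => hNw y hy⟩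
        · exact absurd hh hzu

noncomputable def isoComplete (h : ∀ x y : V, x ≠ y → G.Adj x y) :
    G ≃g completeGraph (Fin (Fintype.card V)) :=
  { toEquiv := Fintype.equivFin V,
    map_rel_iff' := by
      intro a b
      constructor
      · intro hne
        exact h a b (fun hab => hne (by rw [hab]))
      · intro hadj heq
        exact G.ne_of_adj hadj ((Fintype.equivFin V).injective heq) }

noncomputable def isoStar {c : V} (h : IsStar G c) :
    G ≃g completeBipartiteGraph (Fin 1) (Fin (Fintype.card V - 1)) := by
  classical
  have card1 : Fintype.card {x : V // x = c} = 1 := Fintype.card_subtype_eq c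
  have card2 : Fintype.card {x : V // ¬ x = c} = Fintype.card V - 1 := by
    rw [Fintype.card_subtype_compl, Fintype.card_subtype_eq]
  let e1 : Fin 1 ≃ {x : V // x = c} := (Fintype.equivFinOfCardEq card1).symm
  let e2 : Fin (Fintype.card V - 1) ≃ {x : V // ¬ x = c} :=
    (Fintype.equivFinOfCardEq card2).symm
  let F : (Fin 1 ⊕ Fin (Fintype.card V - 1)) ≃ V :=
    (Equiv.sumCongr e1 e2).trans (Equiv.sumCompl _)
  refine SimpleGraph.Iso.symm ⟨F, ?_⟩
  intro a b
  rcases a with i | j <;> rcases b with i' | j'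
  · rw [show F (Sum.inl i) = c from (e1 i).2, show F (Sum.inl i') = c from (e1 i').2]
    exact iff_of_false G.irrefl (by simp [completeBipartiteGraph])
  · rw [show F (Sum.inl i) = c from (e1 i).2]
    exact iff_of_true (h _ (e2 j').2).1 (by simp [completeBipartiteGraph])
  · rw [show F (Sum.inl i') = c from (e1 i').2]
    exact iff_of_true ((h _ (e2 j).2).1).symm (by simp [completeBipartiteGraph])
  · exact iff_of_false (fun hadj => (e2 j').2 ((h _ (e2 j).2).2 _ hadj))
      (by simp [completeBipartiteGraph])

lemma card_pair_subtype {p q : V} (hpq : p ≠ q) [DecidablePred (fun x : V => x = p ∨ x = q)] :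
    Fintype.card {x : V // x = p ∨ x = q} = 2 := by
  classical
  rw [Fintype.card_subtype]
  have : (Finset.univ.filter (fun x : V => x = p ∨ x = q)) = {p, q} := by
    ext x; simp [Finset.mem_insert]
  rw [this]
  rw [Finset.card_insert_of_notMem (by simp [hpq]), Finset.card_singleton]

lemma adj_of_pair {p q : V} (h : TwoCenter G p q) {z x : V}
    (hz : z ≠ p → z ≠ q → False) (hx : x ≠ p ∧ x ≠ q) : G.Adj x z := by
  obtain ⟨hxp, hxq⟩ := hx
  by_cases hzp : z = p
  · exact hzp ▸ (h.2 x hxp hxq).1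
  · by_cases hzq : z = q
    · exact hzq ▸ (h.2 x hxp hxq).2.1
    · exact absurd (hz hzp hzq) id

noncomputable def isoBip {p q : V} (h : TwoCenter G p q) (hpq : ¬ G.Adj p q) :
    G ≃g completeBipartiteGraph (Fin 2) (Fin (Fintype.card V - 2)) := by
  classical
  have card1 : Fintype.card {x : V // x = p ∨ x = q} = 2 := card_pair_subtype h.1
  have card2 : Fintype.card {x : V // ¬ (x = p ∨ x = q)} = Fintype.card V - 2 := by
    rw [Fintype.card_subtype_compl, card1]
  let e1 : Fin 2 ≃ {x : V // x = p ∨ x = q} := (Fintype.equivFinOfCardEq card1).symm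
  let e2 : Fin (Fintype.card V - 2) ≃ {x : V // ¬ (x = p ∨ x = q)} :=
    (Fintype.equivFinOfCardEq card2).symm
  let F : (Fin 2 ⊕ Fin (Fintype.card V - 2)) ≃ V :=
    (Equiv.sumCongr e1 e2).trans (Equiv.sumCompl _)
  have hFl : ∀ i, F (Sum.inl i) = (e1 i).val := fun _ => rfl
  have hFr : ∀ j, F (Sum.inr j) = (e2 j).val := fun _ => rfl
  refine SimpleGraph.Iso.symm ⟨F, ?_⟩
  intro a b
  rcases a with i | j <;> rcases b with i' | j'
  · refine iff_of_false ?_ (by simp [completeBipartiteGraph])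
    intro hadj
    rcases (e1 i).2 with h1 | h1 <;> rcases (e1 i').2 with h2 | h2 <;>
      rw [show F (Sum.inl i) = _ from h1, show F (Sum.inl i') = _ from h2] at hadj
    · exact G.irrefl hadj
    · exact hpq hadj
    · exact hpq hadj.symm
    · exact G.irrefl hadj
  · refine iff_of_true ?_ (by simp [completeBipartiteGraph])
    have h2 := (e2 j').2
    push_neg at h2
    exact (adj_of_pair h (fun h1 h2 => by rw [hFl] at h1 h2; rcases (e1 i).2 with h3 | h3 <;> simp_all) h2).symm
  · refine iff_of_true ?_ (by simp [completeBipartiteGraph])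
    have h2 := (e2 j).2
    push_neg at h2
    exact adj_of_pair h (fun h1 h2 => by rw [hFl] at h1 h2; rcases (e1 i').2 with h3 | h3 <;> simp_all) h2
  · refine iff_of_false ?_ (by simp [completeBipartiteGraph])
    intro hadj
    have h2 := (e2 j).2
    push_neg at h2
    have h3 := (e2 j').2
    rw [hFr] at hadj
    rcases (h.2 _ h2.1 h2.2).2.2 _ hadj with h4 | h4 <;>
      rw [hFr] at h4 <;> simp_all

noncomputable def isoJoin {p q : V} (h : TwoCenter G p q) (hpq : G.Adj p q) :
    G ≃g graphJoin (completeGraph (Fin 2)) (⊥ : SimpleGraph (Fin (Fintype.card V - 2))) := by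
  classical
  have card1 : Fintype.card {x : V // x = p ∨ x = q} = 2 := card_pair_subtype h.1
  have card2 : Fintype.card {x : V // ¬ (x = p ∨ x = q)} = Fintype.card V - 2 := by
    rw [Fintype.card_subtype_compl, card1]
  let e1 : Fin 2 ≃ {x : V // x = p ∨ x = q} := (Fintype.equivFinOfCardEq card1).symm
  let e2 : Fin (Fintype.card V - 2) ≃ {x : V // ¬ (x = p ∨ x = q)} :=
    (Fintype.equivFinOfCardEq card2).symm
  let F : (Fin 2 ⊕ Fin (Fintype.card V - 2)) ≃ V :=
    (Equiv.sumCongr e1 e2).trans (Equiv.sumCompl _)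
  have hFl : ∀ i, F (Sum.inl i) = (e1 i).val := fun _ => rfl
  have hFr : ∀ j, F (Sum.inr j) = (e2 j).val := fun _ => rfl
  refine SimpleGraph.Iso.symm ⟨F, ?_⟩
  intro a b
  rcases a with i | j <;> rcases b with i' | j'
  · show G.Adj ((e1 i).val) ((e1 i').val) ↔ i ≠ i'
    constructor
    · intro hadj hii
      subst hii
      exact G.irrefl hadj
    · intro hii
      have hvv : (e1 i).val ≠ (e1 i').val := by
        intro hv
        exact hii (e1.injective (Subtype.ext hv))
      rcases (e1 i).2 with h1 | h1 <;> rcases (e1 i').2 with h2 | h2 <;>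
        rw [h1, h2] at hvv ⊢
      · exact absurd rfl hvv
      · exact hpq
      · exact hpq.symm
      · exact absurd rfl hvv
  · refine iff_of_true ?_ trivial
    have h2 := (e2 j').2
    push_neg at h2
    exact (adj_of_pair h (fun h1 h2 => by rw [hFl] at h1 h2; rcases (e1 i).2 with h3 | h3 <;> simp_all) h2).symm
  · refine iff_of_true ?_ trivial
    have h2 := (e2 j).2
    push_neg at h2
    exact adj_of_pair h (fun h1 h2 => by rw [hFl] at h1 h2; rcases (e1 i').2 with h3 | h3 <;> simp_all) h2
  · refine iff_of_false ?_ (by simp [graphJoin])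
    intro hadj
    have h2 := (e2 j).2
    push_neg at h2
    have h3 := (e2 j').2
    rw [hFr] at hadj
    rcases (h.2 _ h2.1 h2.2).2.2 _ hadj with h4 | h4 <;>
      rw [hFr] at h4 <;> simp_all

lemma complete_of_iso (e : G ≃g completeGraph (Fin (Fintype.card V))) :
    ∀ x y : V, x ≠ y → G.Adj x y := by
  intro x y hxy
  rw [← e.map_adj_iff]
  exact fun h => hxy (e.toEquiv.injective h)

lemma star_of_iso (e : G ≃g completeBipartiteGraph (Fin 1) (Fin (Fintype.card V - 1))) :
    IsStar G (e.symm (Sum.inl 0)) := by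
  set c := e.symm (Sum.inl 0) with hc
  have hec : e c = Sum.inl 0 := e.apply_symm_apply _
  intro z hz
  have hez : ∃ j, e z = Sum.inr j := by
    rcases he : e z with i | j
    · exfalso
      apply hz
      have : e z = Sum.inl 0 := by rw [he, Subsingleton.elim i 0]
      rw [hc, ← this, e.symm_apply_apply]
    · exact ⟨j, rfl⟩
  obtain ⟨j, hej⟩ := hez
  constructor
  · rw [← e.map_adj_iff, hec, hej]
    simp [completeBipartiteGraph]
  · intro x hadj
    rw [← e.map_adj_iff, hej] at hadj
    rcases hex : e x with i | j'
    · have : e x = Sum.inl 0 := by rw [hex, Subsingleton.elim i 0]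
      rw [hc, ← this, e.symm_apply_apply]
    · rw [hex] at hadj
      simp [completeBipartiteGraph] at hadj

lemma twoCenter_of_isoBip (hn : 3 ≤ Fintype.card V)
    (e : G ≃g completeBipartiteGraph (Fin 2) (Fin (Fintype.card V - 2))) :
    TwoCenter G (e.symm (Sum.inl 0)) (e.symm (Sum.inl 1)) := by
  set p := e.symm (Sum.inl 0) with hp
  set q := e.symm (Sum.inl 1) with hq
  have hep : e p = Sum.inl 0 := e.apply_symm_apply _
  have heq : e q = Sum.inl 1 := e.apply_symm_apply _
  refine ⟨by simp [hp, hq, (e.symm.toEquiv.injective.ne_iff).mpr (show (Sum.inl 0 : Fin 2 ⊕ Fin (Fintype.card V - 2)) ≠ Sum.inl 1 by simp)], ?_⟩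
  intro z hzp hzq
  have hez : ∃ j, e z = Sum.inr j := by
    rcases he : e z with i | j
    · exfalso
      have hi : i = 0 ∨ i = 1 := by omega
      rcases hi with hi | hi <;> subst hi
      · exact hzp (by rw [hp, ← he, e.symm_apply_apply])
      · exact hzq (by rw [hq, ← he, e.symm_apply_apply])
    · exact ⟨j, rfl⟩
  obtain ⟨j, hej⟩ := hez
  refine ⟨?_, ?_, ?_⟩
  · rw [← e.map_adj_iff, hej, hep]; simp [completeBipartiteGraph]
  · rw [← e.map_adj_iff, hej, heq]; simp [completeBipartiteGraph]
  · intro x hadj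
    rw [← e.map_adj_iff, hej] at hadj
    rcases hex : e x with i | j'
    · have hi : i = 0 ∨ i = 1 := by omega
      rcases hi with hi | hi <;> subst hi
      · left; rw [hp, ← hex, e.symm_apply_apply]
      · right; rw [hq, ← hex, e.symm_apply_apply]
    · rw [hex] at hadj
      simp [completeBipartiteGraph] at hadj

lemma twoCenter_of_isoJoin (hn : 3 ≤ Fintype.card V)
    (e : G ≃g graphJoin (completeGraph (Fin 2)) (⊥ : SimpleGraph (Fin (Fintype.card V - 2)))) :
    TwoCenter G (e.symm (Sum.inl 0)) (e.symm (Sum.inl 1)) := by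
  set p := e.symm (Sum.inl 0) with hp
  set q := e.symm (Sum.inl 1) with hq
  have hep : e p = Sum.inl 0 := e.apply_symm_apply _
  have heq : e q = Sum.inl 1 := e.apply_symm_apply _
  refine ⟨by simp [hp, hq, (e.symm.toEquiv.injective.ne_iff).mpr (show (Sum.inl 0 : Fin 2 ⊕ Fin (Fintype.card V - 2)) ≠ Sum.inl 1 by simp)], ?_⟩
  intro z hzp hzq
  have hez : ∃ j, e z = Sum.inr j := by
    rcases he : e z with i | j
    · exfalso
      have hi : i = 0 ∨ i = 1 := by omega
      rcases hi with hi | hi <;> subst hi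
      · exact hzp (by rw [hp, ← he, e.symm_apply_apply])
      · exact hzq (by rw [hq, ← he, e.symm_apply_apply])
    · exact ⟨j, rfl⟩
  obtain ⟨j, hej⟩ := hez
  refine ⟨?_, ?_, ?_⟩
  · rw [← e.map_adj_iff, hej, hep]; simp [graphJoin]
  · rw [← e.map_adj_iff, hej, heq]; simp [graphJoin]
  · intro x hadj
    rw [← e.map_adj_iff, hej] at hadj
    rcases hex : e x with i | j'
    · have hi : i = 0 ∨ i = 1 := by omega
      rcases hi with hi | hi <;> subst hi
      · left; rw [hp, ← hex, e.symm_apply_apply]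
      · right; rw [hq, ← hex, e.symm_apply_apply]
    · rw [hex] at hadj
      simp [graphJoin] at hadj

end Aux

/-- A connected graph `G` of order `n ≥ 3` satisfies `ψ(G) = n − 1` if and only if
`G` is `K_n`, `K_{1,n−1}`, `K_{2,n−2}`, or `K_2 ∨ K̄_{n−2}`. -/
theorem stmt_9 {V : Type*} [Fintype V] (G : SimpleGraph V)
    (hG : G.Connected) (hn : 3 ≤ Fintype.card V) :
    psi G = Fintype.card V - 1 ↔
      (Nonempty (G ≃g completeGraph (Fin (Fintype.card V))) ∨
       Nonempty (G ≃g completeBipartiteGraph (Fin 1) (Fin (Fintype.card V - 1))) ∨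
       Nonempty (G ≃g completeBipartiteGraph (Fin 2) (Fin (Fintype.card V - 2))) ∨
       Nonempty (G ≃g
         graphJoin (completeGraph (Fin 2)) (⊥ : SimpleGraph (Fin (Fintype.card V - 2))))) := by
  rw [psi_eq_iff_allBad hG hn]
  constructor
  · intro hbad
    rcases classify hG hn hbad with h | ⟨c, h⟩ | ⟨p, q, h⟩
    · exact Or.inl ⟨isoComplete h⟩
    · exact Or.inr (Or.inl ⟨isoStar h⟩)
    · by_cases hpq : G.Adj p q
      · exact Or.inr (Or.inr (Or.inr ⟨isoJoin h hpq⟩))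
      · exact Or.inr (Or.inr (Or.inl ⟨isoBip h hpq⟩))
  · rintro (h | h | h | h)
    · obtain ⟨e⟩ := h; exact allBad_of_complete hG (complete_of_iso e)
    · obtain ⟨e⟩ := h; exact allBad_of_star hG (star_of_iso e)
    · obtain ⟨e⟩ := h; exact allBad_of_twoCenter hG (twoCenter_of_isoBip hn e)
    · obtain ⟨e⟩ := h; exact allBad_of_twoCenter hG (twoCenter_of_isoJoin hn e)
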